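/- Let x ≤ 0 ≤ y be integers and ℓ : ℤ → {L, R} a labeling. Let m be the number of sites t with x ≤ t ≤ −1 and ℓ(t) = R, and let n be the number of sites t with 1 ≤ t ≤ y and ℓ(t) = L. Then the rotor walk in [x, y] started at 0 stops at x−1 if m < n, or if m = n and ℓ(0) = L; and it stops at y+1 if m > n, or if m = n and ℓ(0) = R. -/

import Mathlib

/-- One step of the one-dimensional rotor walk: a particle at site `t` moves right if the
label there is `R` (`true`) and left if it is `L` (`false`), and the label at `t` is flipped. -/
def walkStep : ℤ × (ℤ → Bool) → ℤ × (ℤ → Bool)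
  | (t, ℓ) => ((if ℓ t then t + 1 else t - 1), Function.update ℓ t (!ℓ t))

/-- The stopping time of the rotor walk in `[x, y]` started at `0`: the first time the
particle is outside `[x, y]`. -/
noncomputable def stopTime (x y : ℤ) (ℓ : ℤ → Bool) : ℕ :=
  sInf {n | (walkStep^[n] (0, ℓ)).1 ∉ Set.Icc x y}

/-- The stopping position of the rotor walk in `[x, y]` started at `0`. -/
noncomputable def stopPos (x y : ℤ) (ℓ : ℤ → Bool) : ℤ :=
  (walkStep^[stopTime x y ℓ] (0, ℓ)).1

noncomputable def stopPos' (x y : ℤ) (p : ℤ × (ℤ → Bool)) : ℤ :=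
  (walkStep^[sInf {n | (walkStep^[n] p).1 ∉ Set.Icc x y}] p).1

lemma stopPos'_out (x y : ℤ) (p : ℤ × (ℤ → Bool)) (h : p.1 ∉ Set.Icc x y) :
    stopPos' x y p = p.1 := by
  have h0 : sInf {n | (walkStep^[n] p).1 ∉ Set.Icc x y} = 0 :=
    Nat.sInf_eq_zero.mpr (Or.inl (by simpa using h))
  unfold stopPos'
  rw [h0]
  rfl

lemma stopPos'_step (x y : ℤ) (p : ℤ × (ℤ → Bool)) (h : p.1 ∈ Set.Icc x y)
    (h2 : stopPos' x y (walkStep p) ∉ Set.Icc x y) :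
    stopPos' x y p = stopPos' x y (walkStep p) := by
  set S' : Set ℕ := {n | (walkStep^[n] (walkStep p)).1 ∉ Set.Icc x y} with hS'
  have hne : S'.Nonempty := by
    by_contra hemp
    rw [Set.not_nonempty_iff_eq_empty] at hemp
    have : stopPos' x y (walkStep p) = (walkStep p).1 := by
      unfold stopPos'
      rw [← hS', hemp, Nat.sInf_empty]
      rfl
    rw [this] at h2
    have : (0 : ℕ) ∈ S' := h2
    rw [hemp] at this
    exact this
  set k₀ := sInf S' with hk₀def
  have hk₀ : k₀ ∈ S' := Nat.sInf_mem hne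
  have hiter : ∀ j : ℕ, (walkStep^[j+1] p) = (walkStep^[j] (walkStep p)) := by
    intro j; rw [Function.iterate_succ_apply]
  have hmem : (k₀ + 1) ∈ {n | (walkStep^[n] p).1 ∉ Set.Icc x y} := by
    show (walkStep^[k₀+1] p).1 ∉ Set.Icc x y
    rw [hiter]; exact hk₀
  have hinf : sInf {n | (walkStep^[n] p).1 ∉ Set.Icc x y} = k₀ + 1 := by
    apply le_antisymm (Nat.sInf_le hmem)
    apply le_csInf ⟨k₀ + 1, hmem⟩
    intro j hj
    rcases j with _ | j'
    · exact absurd h hj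
    · have : j' ∈ S' := by
        show (walkStep^[j'] (walkStep p)).1 ∉ Set.Icc x y
        rw [← hiter]; exact hj
      exact Nat.succ_le_succ (Nat.sInf_le this)
  show (walkStep^[sInf {n | (walkStep^[n] p).1 ∉ Set.Icc x y}] p).1 = _
  rw [hinf, hiter]
  rfl

lemma filter_Icc_split_right (a b : ℤ) (hab : a ≤ b) (q : ℤ → Prop) [DecidablePred q] :
    ((Finset.Icc a b).filter q).card
      = ((Finset.Icc a (b-1)).filter q).card + (if q b then 1 else 0) := by
  have hins : Finset.Icc a b = insert b (Finset.Icc a (b-1)) := by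
    ext t; simp only [Finset.mem_Icc, Finset.mem_insert]; omega
  rw [hins, Finset.filter_insert]
  split
  · rw [Finset.card_insert_of_notMem (by simp [Finset.mem_Icc])]
  · simp

lemma filter_Icc_split_left (a b : ℤ) (hab : a ≤ b) (q : ℤ → Prop) [DecidablePred q] :
    ((Finset.Icc a b).filter q).card
      = (if q a then 1 else 0) + ((Finset.Icc (a+1) b).filter q).card := by
  have hins : Finset.Icc a b = insert a (Finset.Icc (a+1) b) := by
    ext t; simp only [Finset.mem_Icc, Finset.mem_insert]; omega
  rw [hins, Finset.filter_insert]
  split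
  · rw [Finset.card_insert_of_notMem (by simp [Finset.mem_Icc])]
    omega
  · simp

lemma filter_update_eq (a b s : ℤ) (hs : s ∉ Finset.Icc a b) (ℓ : ℤ → Bool) (v w : Bool) :
    ((Finset.Icc a b).filter (fun t => Function.update ℓ s v t = w))
      = ((Finset.Icc a b).filter (fun t => ℓ t = w)) := by
  apply Finset.filter_congr
  intro t ht
  have hts : t ≠ s := fun h => hs (h ▸ ht)
  simp [Function.update_of_ne hts]

noncomputable def Mc (x s : ℤ) (ℓ : ℤ → Bool) : ℕ :=
  ((Finset.Icc x (s-1)).filter (fun t => ℓ t = true)).card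

noncomputable def Nc (y s : ℤ) (ℓ : ℤ → Bool) : ℕ :=
  ((Finset.Icc (s+1) y).filter (fun t => ℓ t = false)).card

noncomputable def meas (x y s : ℤ) (ℓ : ℤ → Bool) : ℕ :=
  (Mc x s ℓ + Nc y s ℓ) * (y - x + 2).toNat
    + (if ℓ s then (y + 1 - s).toNat else (s - x + 1).toNat)

lemma rotor_main (x y : ℤ) : ∀ (K : ℕ) (s : ℤ) (ℓ : ℤ → Bool), x ≤ s → s ≤ y →
    meas x y s ℓ ≤ K →
    ((Mc x s ℓ < Nc y s ℓ ∨ (Mc x s ℓ = Nc y s ℓ ∧ ℓ s = false)) →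
        stopPos' x y (s, ℓ) = x - 1) ∧
    (¬(Mc x s ℓ < Nc y s ℓ ∨ (Mc x s ℓ = Nc y s ℓ ∧ ℓ s = false)) →
        stopPos' x y (s, ℓ) = y + 1) := by
  intro K
  induction K with
  | zero =>
    intro s ℓ hxs hsy hme
    exfalso
    have hD : (if ℓ s then (y + 1 - s).toNat else (s - x + 1).toNat) ≤ 0 :=
      le_trans (Nat.le_add_left _ _) hme
    cases hls : ℓ s <;> rw [hls] at hD <;> simp at hD <;> omega
  | succ K ih =>
    intro s ℓ hxs hsy hme
    cases hls : ℓ s with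
    | true =>
      have hq : walkStep (s, ℓ) = (s + 1, Function.update ℓ s false) := by
        simp [walkStep, hls]
      rcases lt_or_ge y (s+1) with hy1 | hy1
      · -- terminal step to the right
        have hout : ((s + 1 : ℤ), Function.update ℓ s false).1 ∉ Set.Icc x y := by
          simp only [Set.mem_Icc, not_and, not_le]; intro _; omega
        have h1 : stopPos' x y (s, ℓ) = s + 1 := by
          rw [stopPos'_step x y (s, ℓ) (by simp only [Set.mem_Icc]; exact ⟨hxs, hsy⟩)
            (by rw [hq, stopPos'_out _ _ _ hout]; exact hout), hq, stopPos'_out _ _ _ hout]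
        have hN0 : Nc y s ℓ = 0 := by
          unfold Nc; rw [Finset.Icc_eq_empty (by omega)]; simp
        constructor
        · intro hcond
          exfalso
          rw [hN0] at hcond
          rcases hcond with h | ⟨_, h⟩
          · omega
          · simp at h
        · intro _
          rw [h1]
          omega
      · -- recursive step to the right
        set ℓ' := Function.update ℓ s false with hℓ'
        have hM' : Mc x (s+1) ℓ' = Mc x s ℓ := by
          unfold Mc
          have h1 : s + 1 - 1 = s := by ring
          rw [h1, filter_Icc_split_right x s hxs,
            filter_update_eq x (s-1) s (by simp only [Finset.mem_Icc]; omega) ℓ false true]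
          simp [hℓ', Function.update_self]
        have hN' : Nc y s ℓ = (if ℓ (s+1) = false then 1 else 0) + Nc y (s+1) ℓ' := by
          unfold Nc
          rw [filter_Icc_split_left (s+1) y hy1]
          congr 1
          rw [filter_update_eq (s+1+1) y s (by simp only [Finset.mem_Icc]; omega) ℓ false false]
        have hup : ℓ' (s+1) = ℓ (s+1) := Function.update_of_ne (by omega) _ _
        have hmeas' : meas x y (s+1) ℓ' ≤ K := by
          have hlt : meas x y (s+1) ℓ' < meas x y s ℓ := by
            unfold meas
            rw [hM', hls, hup]
            cases hc : ℓ (s+1) with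
            | true =>
              rw [hc] at hN'
              norm_num at hN'
              rw [hN']
              norm_num
              have : (y + 1 - (s+1)).toNat < (y + 1 - s).toNat := by omega
              omega
            | false =>
              rw [hc] at hN'
              norm_num at hN'
              rw [hN']
              simp only [if_pos rfl]
              have e1 : (Mc x s ℓ + (1 + Nc y (s+1) ℓ')) * (y - x + 2).toNat
                  = (Mc x s ℓ + Nc y (s+1) ℓ') * (y - x + 2).toNat + (y - x + 2).toNat := by
                ring
              rw [e1]
              norm_num
              have : (s + 1 - x + 1).toNat < (y - x + 2).toNat := by omega
              omega
          omega
        obtain ⟨ih1, ih2⟩ := ih (s+1) ℓ' (by omega) hy1 hmeas'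
        have hstep : stopPos' x y (s, ℓ) = stopPos' x y (s+1, ℓ') := by
          rw [← hq]
          apply stopPos'_step x y (s, ℓ) (by simp only [Set.mem_Icc]; exact ⟨hxs, hsy⟩)
          rw [hq]
          by_cases hcond' : (Mc x (s+1) ℓ' < Nc y (s+1) ℓ' ∨
              (Mc x (s+1) ℓ' = Nc y (s+1) ℓ' ∧ ℓ' (s+1) = false))
          · rw [ih1 hcond']; simp only [Set.mem_Icc, not_and, not_le]; omega
          · rw [ih2 hcond']; simp only [Set.mem_Icc, not_and, not_le]; omega
        constructor
        · intro hcond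
          rw [hstep]
          apply ih1
          have hMN : Mc x s ℓ < Nc y s ℓ := by
            rcases hcond with h | ⟨_, h⟩
            · exact h
            · simp at h
          rw [hM']
          cases hc : ℓ (s+1) with
          | true =>
            rw [hc] at hN'
            norm_num at hN'
            left; omega
          | false =>
            rw [hc] at hN' hup
            norm_num at hN'
            rcases (by omega : Mc x s ℓ < Nc y (s+1) ℓ' ∨ Mc x s ℓ = Nc y (s+1) ℓ') with h' | h'
            · left; exact h'
            · right; exact ⟨h', hup⟩
        · intro hcond
          rw [hstep]
          apply ih2
          have hMN : Nc y s ℓ ≤ Mc x s ℓ := by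
            by_contra hcon
            push_neg at hcon
            exact hcond (Or.inl hcon)
          intro hcond'
          rw [hM'] at hcond'
          cases hc : ℓ (s+1) with
          | true =>
            rw [hc] at hN' hup
            norm_num at hN'
            rcases hcond' with h | ⟨_, h⟩
            · omega
            · rw [hup] at h; simp at h
          | false =>
            rw [hc] at hN'
            norm_num at hN'
            rcases hcond' with h | ⟨h, _⟩ <;> omega
    | false =>
      have hq : walkStep (s, ℓ) = (s - 1, Function.update ℓ s true) := by
        simp [walkStep, hls]
      rcases lt_or_ge (s-1) x with hx1 | hx1
      · -- terminal step to the left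
        have hout : ((s - 1 : ℤ), Function.update ℓ s true).1 ∉ Set.Icc x y := by
          simp only [Set.mem_Icc, not_and, not_le]; omega
        have h1 : stopPos' x y (s, ℓ) = s - 1 := by
          rw [stopPos'_step x y (s, ℓ) (by simp only [Set.mem_Icc]; exact ⟨hxs, hsy⟩)
            (by rw [hq, stopPos'_out _ _ _ hout]; exact hout), hq, stopPos'_out _ _ _ hout]
        have hM0 : Mc x s ℓ = 0 := by
          unfold Mc; rw [Finset.Icc_eq_empty (by omega)]; simp
        constructor
        · intro _
          rw [h1]
          omega
        · intro hcond
          exfalso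
          apply hcond
          rw [hM0]
          rcases Nat.eq_zero_or_pos (Nc y s ℓ) with h | h
          · right; exact ⟨h.symm, rfl⟩
          · left; omega
      · -- recursive step to the left
        set ℓ' := Function.update ℓ s true with hℓ'
        have hN' : Nc y (s-1) ℓ' = Nc y s ℓ := by
          unfold Nc
          have h1 : s - 1 + 1 = s := by ring
          rw [h1, filter_Icc_split_left s y hsy,
            filter_update_eq (s+1) y s (by simp only [Finset.mem_Icc]; omega) ℓ true false]
          simp [hℓ', Function.update_self]
        have hM' : Mc x s ℓ = (if ℓ (s-1) = true then 1 else 0) + Mc x (s-1) ℓ' := by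
          unfold Mc
          rw [filter_Icc_split_right x (s-1) hx1]
          rw [filter_update_eq x (s-1-1) s (by simp only [Finset.mem_Icc]; omega) ℓ true true]
          omega
        have hup : ℓ' (s-1) = ℓ (s-1) := Function.update_of_ne (by omega) _ _
        have hmeas' : meas x y (s-1) ℓ' ≤ K := by
          have hlt : meas x y (s-1) ℓ' < meas x y s ℓ := by
            unfold meas
            rw [hN', hls, hup]
            cases hc : ℓ (s-1) with
            | false =>
              rw [hc] at hM'
              norm_num at hM'
              rw [hM']
              norm_num
              have : (s - 1 - x + 1).toNat < (s - x + 1).toNat := by omega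
              omega
            | true =>
              rw [hc] at hM'
              norm_num at hM'
              rw [hM']
              simp only [if_pos rfl, if_neg (by simp : ¬ (false = true))]
              have e1 : ((1 + Mc x (s-1) ℓ') + Nc y s ℓ) * (y - x + 2).toNat
                  = (Mc x (s-1) ℓ' + Nc y s ℓ) * (y - x + 2).toNat + (y - x + 2).toNat := by
                ring
              rw [e1]
              norm_num
              have : (y + 1 - (s - 1)).toNat < (y - x + 2).toNat := by omega
              omega
          omega
        obtain ⟨ih1, ih2⟩ := ih (s-1) ℓ' hx1 (by omega) hmeas'
        have hstep : stopPos' x y (s, ℓ) = stopPos' x y (s-1, ℓ') := by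
          rw [← hq]
          apply stopPos'_step x y (s, ℓ) (by simp only [Set.mem_Icc]; exact ⟨hxs, hsy⟩)
          rw [hq]
          by_cases hcond' : (Mc x (s-1) ℓ' < Nc y (s-1) ℓ' ∨
              (Mc x (s-1) ℓ' = Nc y (s-1) ℓ' ∧ ℓ' (s-1) = false))
          · rw [ih1 hcond']; simp only [Set.mem_Icc, not_and, not_le]; omega
          · rw [ih2 hcond']; simp only [Set.mem_Icc, not_and, not_le]; omega
        constructor
        · intro hcond
          rw [hstep]
          apply ih1
          have hMN : Mc x s ℓ ≤ Nc y s ℓ := by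
            rcases hcond with h | ⟨h, _⟩ <;> omega
          rw [hN']
          cases hc : ℓ (s-1) with
          | true =>
            rw [hc] at hM'
            norm_num at hM'
            left; omega
          | false =>
            rw [hc] at hM' hup
            norm_num at hM'
            rcases (by omega : Mc x (s-1) ℓ' < Nc y s ℓ ∨ Mc x (s-1) ℓ' = Nc y s ℓ) with h' | h'
            · left; exact h'
            · right; exact ⟨h', hup⟩
        · intro hcond
          rw [hstep]
          apply ih2
          have hMN : Nc y s ℓ < Mc x s ℓ := by
            by_contra hcon
            push_neg at hcon
            rcases Nat.lt_or_ge (Mc x s ℓ) (Nc y s ℓ) with h | h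
            · exact hcond (Or.inl h)
            · exact hcond (Or.inr ⟨by omega, rfl⟩)
          intro hcond'
          rw [hN'] at hcond'
          cases hc : ℓ (s-1) with
          | true =>
            rw [hc] at hM' hup
            norm_num at hM'
            rcases hcond' with h | ⟨_, h⟩
            · omega
            · rw [hup] at h; simp at h
          | false =>
            rw [hc] at hM'
            norm_num at hM'
            rcases hcond' with h | ⟨h, _⟩ <;> omega


/-- Let `x ≤ 0 ≤ y`, let `m` be the number of sites in `[x, −1]` labeled `R` and `n` the
number of sites in `[1, y]` labeled `L`.  The rotor walk in `[x, y]` started at `0` stops at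
`x − 1` if `m < n`, or if `m = n` and the origin is labeled `L`; and it stops at `y + 1` if
`m > n`, or if `m = n` and the origin is labeled `R`. -/
theorem rotor_walk_zigzag (x y : ℤ) (hx : x ≤ 0) (hy : 0 ≤ y) (ℓ : ℤ → Bool)
    (m n : ℕ)
    (hm : m = ((Finset.Icc x (-1)).filter (fun t => ℓ t = true)).card)
    (hn : n = ((Finset.Icc 1 y).filter (fun t => ℓ t = false)).card) :
    ((m < n ∨ (m = n ∧ ℓ 0 = false)) → stopPos x y ℓ = x - 1) ∧
    ((n < m ∨ (m = n ∧ ℓ 0 = true)) → stopPos x y ℓ = y + 1) := by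
  have key := rotor_main x y (meas x y 0 ℓ) 0 ℓ hx hy le_rfl
  have hMc : Mc x 0 ℓ = m := by
    unfold Mc
    have h1 : (0:ℤ) - 1 = -1 := by norm_num
    rw [h1, ← hm]
  have hNc : Nc y 0 ℓ = n := by
    unfold Nc
    have h1 : (0:ℤ) + 1 = 1 := by norm_num
    rw [h1, ← hn]
  rw [hMc, hNc] at key
  have hstop : stopPos x y ℓ = stopPos' x y (0, ℓ) := rfl
  obtain ⟨k1, k2⟩ := key
  constructor
  · intro h
    rw [hstop]
    exact k1 h
  · intro h
    rw [hstop]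
    apply k2
    intro hcond
    rcases h with h | ⟨h1, h2⟩ <;> rcases hcond with h' | ⟨h1', h2'⟩
    · omega
    · omega
    · omega
    · rw [h2] at h2'; simp at h2'
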